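/- For every k ≥ 1, the prefix of the Thue–Morse word t of length 8k is an irreducible overlap-free word; consequently, deleting any single letter of t at a position other than the first creates an overlap. -/

import Mathlib

/-- An overlap is a word of the form xYxYx where x is a letter and Y is a
possibly empty word. -/
def IsOverlap {α : Type*} (w : List α) : Prop :=
  ∃ (x : α) (Y : List α), w = [x] ++ Y ++ [x] ++ Y ++ [x]

/-- A word contains an overlap if some factor (contiguous subword) of it is an overlap. -/
def HasOverlap {α : Type*} (w : List α) : Prop :=
  ∃ u, u <:+: w ∧ IsOverlap u

/-- A word is overlap-free if none of its factors is an overlap. -/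
def OverlapFree {α : Type*} (w : List α) : Prop := ¬ HasOverlap w

/-- An irreducible overlap-free word: an overlap-free word of length at least 3
such that removing any one interior letter creates an overlap. -/
def IrreducibleOverlapFree (w : List (Fin 2)) : Prop :=
  OverlapFree w ∧ 3 ≤ w.length ∧
    ∀ i : ℕ, 0 < i → i + 1 < w.length → HasOverlap (w.eraseIdx i)

open Fin.NatCast in
/-- The Thue–Morse word: the n-th letter (0-indexed) is the parity of the number
of 1s in the binary expansion of n. -/
def thueMorse (n : ℕ) : Fin 2 := ((Nat.digits 2 n).sum : Fin 2)

/-- The finite prefix of length n of an infinite word. -/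
def wordPrefix {α : Type*} (s : ℕ → α) (n : ℕ) : List α := (List.range n).map s

/- ===== auxiliary lemmas ===== -/

lemma fin2_or (a b : Fin 2) : a = b ∨ a = b + 1 := by
  revert a b; decide

lemma fin2_ne (a b : Fin 2) (h : a + 1 ≠ b) : a = b := by
  revert a b; decide

lemma tm_even (n : ℕ) : thueMorse (2*n) = thueMorse n := by
  rcases Nat.eq_zero_or_pos n with h|h
  · subst h; rfl
  · unfold thueMorse
    rw [Nat.digits_def' (by norm_num : (1:ℕ)<2) (by omega)]
    have h1 : 2*n % 2 = 0 := by omega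
    have h2 : 2*n / 2 = n := by omega
    rw [h1, h2, List.sum_cons]
    push_cast
    ring

lemma tm_odd (n : ℕ) : thueMorse (2*n+1) = thueMorse n + 1 := by
  unfold thueMorse
  rw [Nat.digits_def' (by norm_num : (1:ℕ)<2) (by omega)]
  have h1 : (2*n+1) % 2 = 1 := by omega
  have h2 : (2*n+1) / 2 = n := by omega
  rw [h1, h2, List.sum_cons]
  apply Fin.ext; simp [Fin.val_add]; omega

lemma tm_ne (n : ℕ) : thueMorse (2*n) ≠ thueMorse (2*n+1) := by
  rw [tm_even, tm_odd]
  generalize thueMorse n = a; revert a; decide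

lemma no3 (n : ℕ) (h1 : thueMorse n = thueMorse (n+1))
    (h2 : thueMorse (n+1) = thueMorse (n+2)) : False := by
  rcases Nat.even_or_odd n with ⟨a, ha⟩|⟨a, ha⟩
  · have hn : n = 2*a := by omega
    subst hn
    exact tm_ne a h1
  · have hn : n = 2*a+1 := by omega
    subst hn
    have h2x : thueMorse (2*(a+1)) = thueMorse (2*(a+1)+1) := by
      rw [show 2*(a+1)+1 = 2*a+1+2 by ring, show 2*(a+1) = 2*a+1+1 by ring]
      exact h2
    exact tm_ne (a+1) h2x

lemma noPeriod : ∀ p, 0 < p → ∀ m, ¬ (∀ j, j ≤ p → thueMorse (m+j) = thueMorse (m+j+p)) := by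
  intro p
  induction p using Nat.strong_induction_on with
  | _ p ih =>
    intro hp m H
    rcases Nat.even_or_odd p with ⟨q, hq⟩|⟨q, hq⟩
    · -- p = 2q even
      have hq' : p = 2*q := by omega
      have hq0 : 0 < q := by omega
      rcases Nat.even_or_odd m with ⟨a, ha⟩|⟨a, ha⟩
      · have ha' : m = 2*a := by omega
        apply ih q (by omega) hq0 a
        intro j hj
        have h1 := H (2*j) (by omega)
        rw [show m + 2*j = 2*(a+j) by omega, show 2*(a+j)+p = 2*(a+j+q) by omega,
            tm_even, tm_even] at h1
        exact h1
      · have ha' : m = 2*a+1 := by omega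
        apply ih q (by omega) hq0 a
        intro j hj
        have h1 := H (2*j) (by omega)
        rw [show m + 2*j = 2*(a+j)+1 by omega, show 2*(a+j)+1+p = 2*(a+j+q)+1 by omega,
            tm_odd, tm_odd] at h1
        exact add_right_cancel h1
    · -- p = 2q+1 odd
      have hq' : p = 2*q+1 := by omega
      rcases Nat.eq_zero_or_pos q with hq0|hq0
      · -- p = 1
        have hp1 : p = 1 := by omega
        subst hp1
        exact no3 m (H 0 (by omega)) (by
          have := H 1 (by omega)
          rw [show m+1+1 = m+2 by ring] at this
          exact this)
      · -- p ≥ 3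
        -- helper to derive t b = t (b+1) from H j, H (j+1) :
        have step : ∀ c b : ℕ, thueMorse (2*c) = thueMorse (2*b+1) →
            thueMorse (2*c+1) = thueMorse (2*b+2) → thueMorse b = thueMorse (b+1) := by
          intro c b e1 e2
          apply fin2_ne
          intro hcon
          apply tm_ne c
          rw [e1, e2, show 2*b+2 = 2*(b+1) by ring, tm_even, ← hcon, tm_odd]
        rcases Nat.even_or_odd m with ⟨a, ha⟩|⟨a, ha⟩
        · have ha' : m = 2*a := by omega
          subst ha'
          have X1 : thueMorse (a+q) = thueMorse (a+q+1) := by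
            apply step a
            · have := H 0 (by omega)
              rw [show 2*a+0 = 2*a by ring, show 2*a+p = 2*(a+q)+1 by omega] at this
              exact this
            · have := H 1 (by omega)
              rw [show 2*a+1+p = 2*(a+q)+2 by omega] at this
              exact this
          have X2 : thueMorse (a+q+1) = thueMorse (a+q+2) := by
            apply step (a+1)
            · have := H 2 (by omega)
              rw [show 2*a+2 = 2*(a+1) by ring, show 2*(a+1)+p = 2*(a+q+1)+1 by omega] at this
              exact this
            · have := H 3 (by omega)
              rw [show 2*a+3 = 2*(a+1)+1 by ring, show 2*(a+1)+1+p = 2*(a+q+1)+2 by omega] at this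
              exact this
          exact no3 (a+q) X1 X2
        · have ha' : m = 2*a+1 := by omega
          subst ha'
          have X1 : thueMorse a = thueMorse (a+1) := by
            apply step (a+q+1)
            · have := H 0 (by omega)
              rw [show 2*a+1+0 = 2*a+1 by ring, show 2*a+1+p = 2*(a+q+1) by omega] at this
              exact this.symm
            · have := H 1 (by omega)
              rw [show 2*a+1+1 = 2*a+2 by ring, show 2*a+1+1+p = 2*(a+q+1)+1 by omega] at this
              exact this.symm
          have X2 : thueMorse (a+1) = thueMorse (a+2) := by
            apply step (a+q+2)
            · have := H 2 (by omega)
              rw [show 2*a+1+2 = 2*(a+1)+1 by ring, show 2*(a+1)+1+p = 2*(a+q+2) by omega] at this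
              exact this.symm
            · have := H 3 (by omega)
              rw [show 2*a+1+3 = 2*(a+2) by ring, show 2*(a+2)+p = 2*(a+q+2)+1 by omega] at this
              exact this.symm
          exact no3 a X1 X2

/-- Deriving a periodicity from an overlap in a mapped range. -/
lemma period_of_overlap {f : ℕ → Fin 2} {L : ℕ}
    (h : HasOverlap ((List.range L).map f)) :
    ∃ m p, 0 < p ∧ ∀ j, j ≤ p → f (m+j) = f (m+j+p) := by
  obtain ⟨u, ⟨s, tl, hst⟩, x, Y, hu⟩ := h
  refine ⟨s.length, Y.length + 1, Nat.succ_pos _, ?_⟩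
  set p := Y.length + 1 with hp
  have hul : u.length = 2*p + 1 := by
    subst hu; simp [hp]; ring
  have hu2 : u = (x :: Y) ++ ((x :: Y) ++ [x]) := by
    subst hu; simp
  have hxl : (x :: Y).length = p := by simp [hp]
  have hlen : s.length + u.length + tl.length = L := by
    have := congrArg List.length hst
    simp at this
    omega
  have hval : ∀ j, j < u.length → u[j]? = some (f (s.length + j)) := by
    intro j hj
    have e1 := congrArg (fun l => l[s.length + j]?) hst
    have e2 : (s ++ u ++ tl)[s.length+j]? = (s++u)[s.length+j]? :=
      List.getElem?_append_left (by simp; omega)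
    have e3 : (s++u)[s.length+j]? = u[s.length+j - s.length]? :=
      List.getElem?_append_right (by omega)
    have e4 : ((List.range L).map f)[s.length+j]? = some (f (s.length+j)) := by
      rw [List.getElem?_map, List.getElem?_range (by omega)]
      rfl
    rw [e2, e3, show s.length + j - s.length = j by omega, e4] at e1
    exact e1
  have hshape : ∀ j, j ≤ p → u[j]? = u[j+p]? := by
    intro j hj
    rcases Nat.lt_or_ge j p with hjp | hjp
    · have a1 : u[j]? = (x::Y)[j]? := by
        rw [hu2]; exact List.getElem?_append_left (by omega)
      have a2 : u[j+p]? = ((x::Y)++[x])[j+p-(x::Y).length]? := by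
        rw [hu2]; exact List.getElem?_append_right (by omega)
      have a3 : ((x::Y)++[x])[j]? = (x::Y)[j]? :=
        List.getElem?_append_left (by omega)
      rw [a1, a2, show j+p-(x::Y).length = j by omega, a3]
    · have hjp2 : j = p := by omega
      subst hjp2
      have a1 : u[p]? = ((x::Y)++[x])[p-(x::Y).length]? := by
        rw [hu2]; exact List.getElem?_append_right (by omega)
      have a2 : u[p+p]? = ((x::Y)++[x])[p+p-(x::Y).length]? := by
        rw [hu2]; exact List.getElem?_append_right (by omega)
      have a3 : ((x::Y)++[x])[0]? = (x::Y)[0]? :=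
        List.getElem?_append_left (by omega)
      have a4 : ((x::Y)++[x])[p]? = [x][p-(x::Y).length]? :=
        List.getElem?_append_right (by omega)
      rw [a1, a2, show p-(x::Y).length = 0 by omega, a3,
          show p+p-(x::Y).length = p by omega, a4,
          show p-(x::Y).length = 0 by omega]
      simp
  intro j hj
  have h1 := hval j (by omega)
  have h2 := hval (j+p) (by omega)
  rw [hshape j hj, h2] at h1
  rw [show s.length + j + p = s.length + (j+p) by ring]
  exact (Option.some.inj h1).symm

lemma tv0 : thueMorse 0 = 0 := by simp [thueMorse]
lemma tv1 : thueMorse 1 = 1 := by have h := tm_odd 0; rw [tv0] at h; exact h.trans (by decide)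
lemma tv2 : thueMorse 2 = 1 := by have h := tm_even 1; rw [tv1] at h; exact h
lemma tv3 : thueMorse 3 = 0 := by have h := tm_odd 1; rw [tv1] at h; exact h.trans (by decide)
lemma tv4 : thueMorse 4 = 1 := by have h := tm_even 2; rw [tv2] at h; exact h
lemma tv5 : thueMorse 5 = 0 := by have h := tm_odd 2; rw [tv2] at h; exact h.trans (by decide)
lemma tv6 : thueMorse 6 = 0 := by have h := tm_even 3; rw [tv3] at h; exact h
lemma tv7 : thueMorse 7 = 1 := by have h := tm_odd 3; rw [tv3] at h; exact h.trans (by decide)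
lemma tv8 : thueMorse 8 = 1 := by have h := tm_even 4; rw [tv4] at h; exact h
lemma tv9 : thueMorse 9 = 0 := by have h := tm_odd 4; rw [tv4] at h; exact h.trans (by decide)
lemma tv10 : thueMorse 10 = 0 := by have h := tm_even 5; rw [tv5] at h; exact h
lemma tv11 : thueMorse 11 = 1 := by have h := tm_odd 5; rw [tv5] at h; exact h.trans (by decide)
lemma tv12 : thueMorse 12 = 0 := by have h := tm_even 6; rw [tv6] at h; exact h
lemma tv13 : thueMorse 13 = 1 := by have h := tm_odd 6; rw [tv6] at h; exact h.trans (by decide)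
lemma tv14 : thueMorse 14 = 1 := by have h := tm_even 7; rw [tv7] at h; exact h
lemma tv15 : thueMorse 15 = 0 := by have h := tm_odd 7; rw [tv7] at h; exact h.trans (by decide)


lemma overlapFree_mapRange (f : ℕ → Fin 2) (hf2 : ∀ n, f n = thueMorse n) (L : ℕ) :
    OverlapFree ((List.range L).map f) := by
  intro h
  obtain ⟨m, p, hp, hper⟩ := period_of_overlap h
  apply noPeriod p hp m
  intro j hj
  rw [← hf2, ← hf2]
  exact hper j hj

lemma overlapFree_prefix (n : ℕ) : OverlapFree (wordPrefix thueMorse n) :=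
  overlapFree_mapRange thueMorse (fun _ => rfl) n

/-- Building an overlap from a periodicity. -/
lemma hasOverlap_of_period (f : ℕ → Fin 2) (L m p : ℕ) (hp : 0 < p)
    (hend : m + 2*p + 1 ≤ L) (hper : ∀ j, j ≤ p → f (m+j) = f (m+j+p)) :
    HasOverlap ((List.range L).map f) := by
  refine ⟨(List.range (2*p+1)).map (fun j => f (m+j)), ?_, ?_⟩
  · refine ⟨(List.range m).map f,
      (List.range (L - (m+(2*p+1)))).map (fun j => f (m+(2*p+1)+j)), ?_⟩
    have hL : L = m + (2*p+1) + (L - (m+(2*p+1))) := by omega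
    conv_rhs => rw [hL, List.range_add, List.range_add, List.map_append,
      List.map_append, List.map_map, List.map_map]
    rfl
  · refine ⟨f m, (List.range (p-1)).map (fun j => f (m+(j+1))), ?_⟩
    have hsplit : (List.range (2*p+1)).map (fun j => f (m+j)) =
        ((List.range p).map (fun j => f (m+j))) ++
        (((List.range p).map (fun x => f (m+(p+x)))) ++ [f (m+(p+p))]) := by
      rw [show 2*p+1 = p + (p+1) by ring, List.range_add, List.map_append, List.map_map,
          List.range_succ, List.map_append]
      rfl
    have hcopy : (List.range p).map (fun x => f (m+(p+x))) =
        (List.range p).map (fun j => f (m+j)) := by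
      apply List.map_congr_left
      intro x hx
      rw [List.mem_range] at hx
      rw [show m+(p+x) = m+x+p by ring]
      exact (hper x (by omega)).symm
    have hlast : f (m+(p+p)) = f m := by
      rw [show m+(p+p) = m+p+p by ring, ← hper p le_rfl]
      have h0 := hper 0 (by omega)
      have h0x : f m = f (m+p) := by simpa using h0
      exact h0x.symm
    have hhead : (List.range p).map (fun j => f (m+j)) =
        f m :: (List.range (p-1)).map (fun j => f (m+(j+1))) := by
      rw [show p = (p-1)+1 by omega, List.range_succ_eq_map, List.map_cons, List.map_map]
      constructor
    rw [hsplit, hcopy, hlast, hhead]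
    simp

def tp (i x : ℕ) : Fin 2 := if x < i then thueMorse x else thueMorse (x+1)

lemma tp_lt (i x : ℕ) (h : x < i) : tp i x = thueMorse x := if_pos h

lemma tp_ge (i x : ℕ) (h : i ≤ x) : tp i x = thueMorse (x+1) := if_neg (by omega)

lemma eraseIdx_wordPrefix (n i : ℕ) (h : i + 1 < n) :
    (wordPrefix thueMorse n).eraseIdx i = (List.range (n-1)).map (tp i) := by
  apply List.ext_getElem
  · simp [wordPrefix, List.length_eraseIdx]
    omega
  · intro j h1 h2
    rw [List.getElem_eraseIdx]
    simp only [wordPrefix, List.getElem_map, List.getElem_range, tp]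
    split_ifs with h3 <;> rfl

lemma t4 (q s : ℕ) (h : s < 4) : thueMorse (4*q+s) = thueMorse q + thueMorse s := by
  interval_cases s
  · rw [show 4*q+0 = 2*(2*q) by ring, tm_even, tm_even, tv0, add_zero]
  · rw [show 4*q+1 = 2*(2*q)+1 by ring, tm_odd, tm_even, tv1]
  · rw [show 4*q+2 = 2*(2*q+1) by ring, tm_even, tm_odd, tv2]
  · rw [show 4*q+3 = 2*(2*q+1)+1 by ring, tm_odd, tm_odd, tv3]
    all_goals (generalize thueMorse q = a; revert a; decide)

lemma t16 (q s : ℕ) (h : s < 16) : thueMorse (16*q+s) = thueMorse q + thueMorse s := by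
  have h1 : 16*q+s = 4*(4*q + s/4) + s%4 := by omega
  rw [h1, t4 _ _ (by omega), t4 _ _ (by omega)]
  conv_rhs => rw [show s = 4*(s/4)+s%4 by omega, t4 _ _ (by omega)]
  rw [add_assoc]

lemma key (i : ℕ) (hi : 0 < i) :
    ∃ m p, 0 < p ∧ (∀ k, i+1 < 8*k → m+2*p+2 ≤ 8*k) ∧
      ∀ j, j ≤ p → tp i (m+j) = tp i (m+j+p) := by
  have h16 : i % 16 = 0 ∨ i % 16 = 1 ∨ i % 16 = 2 ∨ i % 16 = 3 ∨ i % 16 = 4 ∨ i % 16 = 5 ∨ i % 16 = 6 ∨ i % 16 = 7 ∨ i % 16 = 8 ∨ i % 16 = 9 ∨ i % 16 = 10 ∨ i % 16 = 11 ∨ i % 16 = 12 ∨ i % 16 = 13 ∨ i % 16 = 14 ∨ i % 16 = 15 := by omega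
  rcases h16 with h0|h1|h2|h3|h4|h5|h6|h7|h8|h9|h10|h11|h12|h13|h14|h15
  · -- r = 0
    obtain ⟨q, rfl⟩ : ∃ q, i = 16*q := ⟨i/16, by omega⟩
    have hq1 : 1 ≤ q := by omega
    have hsplit : thueMorse (q-1) = thueMorse q ∨ thueMorse (q-1) = thueMorse q + 1 :=
      fin2_or _ _
    rcases hsplit with hb | hb
    · refine ⟨16*q-4, 3, by norm_num, fun k hk => by omega, ?_⟩
      intro j hj
      have hj' : j = 0 ∨ j = 1 ∨ j = 2 ∨ j = 3 := by omega
      rcases hj' with rfl|rfl|rfl|rfl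
      ·   rw [tp_lt (16*q) (16*q-4+0) (by omega),
              tp_lt (16*q) (16*q-4+0+3) (by omega),
              show 16*q-4+0+3 = 16*(q-1)+15 by omega,
              show 16*q-4+0 = 16*(q-1)+12 by omega,
              t16 (q-1) 15 (by norm_num),
              t16 (q-1) 12 (by norm_num),
              tv12,
              tv15,
              hb]
          all_goals (generalize thueMorse q = a; revert a; decide)
      ·   rw [tp_lt (16*q) (16*q-4+1) (by omega),
              tp_ge (16*q) (16*q-4+1+3) (by omega),
              show 16*q-4+1+3+1 = 16*q+1 by omega,
              show 16*q-4+1 = 16*(q-1)+13 by omega,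
              t16 q 1 (by norm_num),
              t16 (q-1) 13 (by norm_num),
              tv13,
              tv1,
              hb]
          all_goals (generalize thueMorse q = a; revert a; decide)
      ·   rw [tp_lt (16*q) (16*q-4+2) (by omega),
              tp_ge (16*q) (16*q-4+2+3) (by omega),
              show 16*q-4+2+3+1 = 16*q+2 by omega,
              show 16*q-4+2 = 16*(q-1)+14 by omega,
              t16 q 2 (by norm_num),
              t16 (q-1) 14 (by norm_num),
              tv14,
              tv2,
              hb]
          all_goals (generalize thueMorse q = a; revert a; decide)
      ·   rw [tp_lt (16*q) (16*q-4+3) (by omega),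
              tp_ge (16*q) (16*q-4+3+3) (by omega),
              show 16*q-4+3+3+1 = 16*q+3 by omega,
              show 16*q-4+3 = 16*(q-1)+15 by omega,
              t16 q 3 (by norm_num),
              t16 (q-1) 15 (by norm_num),
              tv15,
              tv3,
              hb]
          all_goals (generalize thueMorse q = a; revert a; decide)
    · refine ⟨16*q-1, 1, by norm_num, fun k hk => by omega, ?_⟩
      intro j hj
      have hj' : j = 0 ∨ j = 1 := by omega
      rcases hj' with rfl|rfl
      ·   rw [tp_lt (16*q) (16*q-1+0) (by omega),
              tp_ge (16*q) (16*q-1+0+1) (by omega),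
              show 16*q-1+0+1+1 = 16*q+1 by omega,
              show 16*q-1+0 = 16*(q-1)+15 by omega,
              t16 q 1 (by norm_num),
              t16 (q-1) 15 (by norm_num),
              tv15,
              tv1,
              hb]
          all_goals (generalize thueMorse q = a; revert a; decide)
      ·   rw [tp_ge (16*q) (16*q-1+1) (by omega),
              tp_ge (16*q) (16*q-1+1+1) (by omega),
              show 16*q-1+1+1+1 = 16*q+2 by omega,
              show 16*q-1+1+1 = 16*q+1 by omega,
              t16 q 2 (by norm_num),
              t16 q 1 (by norm_num),
              tv1,
              tv2]
          all_goals (generalize thueMorse q = a; revert a; decide)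
  · -- r = 1
    obtain ⟨q, rfl⟩ : ∃ q, i = 16*q+1 := ⟨i/16, by omega⟩
    refine ⟨16*q, 2, by norm_num, fun k hk => by omega, ?_⟩
    intro j hj
    have hj' : j = 0 ∨ j = 1 ∨ j = 2 := by omega
    rcases hj' with rfl|rfl|rfl
    ·   rw [tp_lt (16*q+1) (16*q+0) (by omega),
            tp_ge (16*q+1) (16*q+0+2) (by omega),
            show 16*q+0+2+1 = 16*q+3 by omega,
            show 16*q+0 = 16*q+0 by omega,
            t16 q 3 (by norm_num),
            t16 q 0 (by norm_num),
            tv0,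
            tv3]
        all_goals (generalize thueMorse q = a; revert a; decide)
    ·   rw [tp_ge (16*q+1) (16*q+1) (by omega),
            tp_ge (16*q+1) (16*q+1+2) (by omega),
            show 16*q+1+2+1 = 16*q+4 by omega,
            show 16*q+1+1 = 16*q+2 by omega,
            t16 q 4 (by norm_num),
            t16 q 2 (by norm_num),
            tv2,
            tv4]
        all_goals (generalize thueMorse q = a; revert a; decide)
    ·   rw [tp_ge (16*q+1) (16*q+2) (by omega),
            tp_ge (16*q+1) (16*q+2+2) (by omega),
            show 16*q+2+2+1 = 16*q+5 by omega,
            show 16*q+2+1 = 16*q+3 by omega,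
            t16 q 5 (by norm_num),
            t16 q 3 (by norm_num),
            tv3,
            tv5]
        all_goals (generalize thueMorse q = a; revert a; decide)
  · -- r = 2
    obtain ⟨q, rfl⟩ : ∃ q, i = 16*q+2 := ⟨i/16, by omega⟩
    refine ⟨16*q, 2, by norm_num, fun k hk => by omega, ?_⟩
    intro j hj
    have hj' : j = 0 ∨ j = 1 ∨ j = 2 := by omega
    rcases hj' with rfl|rfl|rfl
    ·   rw [tp_lt (16*q+2) (16*q+0) (by omega),
            tp_ge (16*q+2) (16*q+0+2) (by omega),
            show 16*q+0+2+1 = 16*q+3 by omega,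
            show 16*q+0 = 16*q+0 by omega,
            t16 q 3 (by norm_num),
            t16 q 0 (by norm_num),
            tv0,
            tv3]
        all_goals (generalize thueMorse q = a; revert a; decide)
    ·   rw [tp_lt (16*q+2) (16*q+1) (by omega),
            tp_ge (16*q+2) (16*q+1+2) (by omega),
            show 16*q+1+2+1 = 16*q+4 by omega,
            show 16*q+1 = 16*q+1 by omega,
            t16 q 4 (by norm_num),
            t16 q 1 (by norm_num),
            tv1,
            tv4]
        all_goals (generalize thueMorse q = a; revert a; decide)
    ·   rw [tp_ge (16*q+2) (16*q+2) (by omega),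
            tp_ge (16*q+2) (16*q+2+2) (by omega),
            show 16*q+2+2+1 = 16*q+5 by omega,
            show 16*q+2+1 = 16*q+3 by omega,
            t16 q 5 (by norm_num),
            t16 q 3 (by norm_num),
            tv3,
            tv5]
        all_goals (generalize thueMorse q = a; revert a; decide)
  · -- r = 3
    obtain ⟨q, rfl⟩ : ∃ q, i = 16*q+3 := ⟨i/16, by omega⟩
    refine ⟨16*q+1, 1, by norm_num, fun k hk => by omega, ?_⟩
    intro j hj
    have hj' : j = 0 ∨ j = 1 := by omega
    rcases hj' with rfl|rfl
    ·   rw [tp_lt (16*q+3) (16*q+1+0) (by omega),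
            tp_lt (16*q+3) (16*q+1+0+1) (by omega),
            show 16*q+1+0+1 = 16*q+2 by omega,
            show 16*q+1+0 = 16*q+1 by omega,
            t16 q 2 (by norm_num),
            t16 q 1 (by norm_num),
            tv1,
            tv2]
        all_goals (generalize thueMorse q = a; revert a; decide)
    ·   rw [tp_lt (16*q+3) (16*q+1+1) (by omega),
            tp_ge (16*q+3) (16*q+1+1+1) (by omega),
            show 16*q+1+1+1+1 = 16*q+4 by omega,
            show 16*q+1+1 = 16*q+2 by omega,
            t16 q 4 (by norm_num),
            t16 q 2 (by norm_num),
            tv2,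
            tv4]
        all_goals (generalize thueMorse q = a; revert a; decide)
  · -- r = 4
    obtain ⟨q, rfl⟩ : ∃ q, i = 16*q+4 := ⟨i/16, by omega⟩
    refine ⟨16*q+3, 1, by norm_num, fun k hk => by omega, ?_⟩
    intro j hj
    have hj' : j = 0 ∨ j = 1 := by omega
    rcases hj' with rfl|rfl
    ·   rw [tp_lt (16*q+4) (16*q+3+0) (by omega),
            tp_ge (16*q+4) (16*q+3+0+1) (by omega),
            show 16*q+3+0+1+1 = 16*q+5 by omega,
            show 16*q+3+0 = 16*q+3 by omega,
            t16 q 5 (by norm_num),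
            t16 q 3 (by norm_num),
            tv3,
            tv5]
        all_goals (generalize thueMorse q = a; revert a; decide)
    ·   rw [tp_ge (16*q+4) (16*q+3+1) (by omega),
            tp_ge (16*q+4) (16*q+3+1+1) (by omega),
            show 16*q+3+1+1+1 = 16*q+6 by omega,
            show 16*q+3+1+1 = 16*q+5 by omega,
            t16 q 6 (by norm_num),
            t16 q 5 (by norm_num),
            tv5,
            tv6]
        all_goals (generalize thueMorse q = a; revert a; decide)
  · -- r = 5
    obtain ⟨q, rfl⟩ : ∃ q, i = 16*q+5 := ⟨i/16, by omega⟩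
    refine ⟨16*q+2, 2, by norm_num, fun k hk => by omega, ?_⟩
    intro j hj
    have hj' : j = 0 ∨ j = 1 ∨ j = 2 := by omega
    rcases hj' with rfl|rfl|rfl
    ·   rw [tp_lt (16*q+5) (16*q+2+0) (by omega),
            tp_lt (16*q+5) (16*q+2+0+2) (by omega),
            show 16*q+2+0+2 = 16*q+4 by omega,
            show 16*q+2+0 = 16*q+2 by omega,
            t16 q 4 (by norm_num),
            t16 q 2 (by norm_num),
            tv2,
            tv4]
        all_goals (generalize thueMorse q = a; revert a; decide)
    ·   rw [tp_lt (16*q+5) (16*q+2+1) (by omega),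
            tp_ge (16*q+5) (16*q+2+1+2) (by omega),
            show 16*q+2+1+2+1 = 16*q+6 by omega,
            show 16*q+2+1 = 16*q+3 by omega,
            t16 q 6 (by norm_num),
            t16 q 3 (by norm_num),
            tv3,
            tv6]
        all_goals (generalize thueMorse q = a; revert a; decide)
    ·   rw [tp_lt (16*q+5) (16*q+2+2) (by omega),
            tp_ge (16*q+5) (16*q+2+2+2) (by omega),
            show 16*q+2+2+2+1 = 16*q+7 by omega,
            show 16*q+2+2 = 16*q+4 by omega,
            t16 q 7 (by norm_num),
            t16 q 4 (by norm_num),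
            tv4,
            tv7]
        all_goals (generalize thueMorse q = a; revert a; decide)
  · -- r = 6
    obtain ⟨q, rfl⟩ : ∃ q, i = 16*q+6 := ⟨i/16, by omega⟩
    refine ⟨16*q+2, 2, by norm_num, fun k hk => by omega, ?_⟩
    intro j hj
    have hj' : j = 0 ∨ j = 1 ∨ j = 2 := by omega
    rcases hj' with rfl|rfl|rfl
    ·   rw [tp_lt (16*q+6) (16*q+2+0) (by omega),
            tp_lt (16*q+6) (16*q+2+0+2) (by omega),
            show 16*q+2+0+2 = 16*q+4 by omega,
            show 16*q+2+0 = 16*q+2 by omega,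
            t16 q 4 (by norm_num),
            t16 q 2 (by norm_num),
            tv2,
            tv4]
        all_goals (generalize thueMorse q = a; revert a; decide)
    ·   rw [tp_lt (16*q+6) (16*q+2+1) (by omega),
            tp_lt (16*q+6) (16*q+2+1+2) (by omega),
            show 16*q+2+1+2 = 16*q+5 by omega,
            show 16*q+2+1 = 16*q+3 by omega,
            t16 q 5 (by norm_num),
            t16 q 3 (by norm_num),
            tv3,
            tv5]
        all_goals (generalize thueMorse q = a; revert a; decide)
    ·   rw [tp_lt (16*q+6) (16*q+2+2) (by omega),
            tp_ge (16*q+6) (16*q+2+2+2) (by omega),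
            show 16*q+2+2+2+1 = 16*q+7 by omega,
            show 16*q+2+2 = 16*q+4 by omega,
            t16 q 7 (by norm_num),
            t16 q 4 (by norm_num),
            tv4,
            tv7]
        all_goals (generalize thueMorse q = a; revert a; decide)
  · -- r = 7
    obtain ⟨q, rfl⟩ : ∃ q, i = 16*q+7 := ⟨i/16, by omega⟩
    refine ⟨16*q+3, 3, by norm_num, fun k hk => by omega, ?_⟩
    intro j hj
    have hj' : j = 0 ∨ j = 1 ∨ j = 2 ∨ j = 3 := by omega
    rcases hj' with rfl|rfl|rfl|rfl
    ·   rw [tp_lt (16*q+7) (16*q+3+0) (by omega),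
            tp_lt (16*q+7) (16*q+3+0+3) (by omega),
            show 16*q+3+0+3 = 16*q+6 by omega,
            show 16*q+3+0 = 16*q+3 by omega,
            t16 q 6 (by norm_num),
            t16 q 3 (by norm_num),
            tv3,
            tv6]
        all_goals (generalize thueMorse q = a; revert a; decide)
    ·   rw [tp_lt (16*q+7) (16*q+3+1) (by omega),
            tp_ge (16*q+7) (16*q+3+1+3) (by omega),
            show 16*q+3+1+3+1 = 16*q+8 by omega,
            show 16*q+3+1 = 16*q+4 by omega,
            t16 q 8 (by norm_num),
            t16 q 4 (by norm_num),
            tv4,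
            tv8]
        all_goals (generalize thueMorse q = a; revert a; decide)
    ·   rw [tp_lt (16*q+7) (16*q+3+2) (by omega),
            tp_ge (16*q+7) (16*q+3+2+3) (by omega),
            show 16*q+3+2+3+1 = 16*q+9 by omega,
            show 16*q+3+2 = 16*q+5 by omega,
            t16 q 9 (by norm_num),
            t16 q 5 (by norm_num),
            tv5,
            tv9]
        all_goals (generalize thueMorse q = a; revert a; decide)
    ·   rw [tp_lt (16*q+7) (16*q+3+3) (by omega),
            tp_ge (16*q+7) (16*q+3+3+3) (by omega),
            show 16*q+3+3+3+1 = 16*q+10 by omega,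
            show 16*q+3+3 = 16*q+6 by omega,
            t16 q 10 (by norm_num),
            t16 q 6 (by norm_num),
            tv6,
            tv10]
        all_goals (generalize thueMorse q = a; revert a; decide)
  · -- r = 8
    obtain ⟨q, rfl⟩ : ∃ q, i = 16*q+8 := ⟨i/16, by omega⟩
    refine ⟨16*q+4, 3, by norm_num, fun k hk => by omega, ?_⟩
    intro j hj
    have hj' : j = 0 ∨ j = 1 ∨ j = 2 ∨ j = 3 := by omega
    rcases hj' with rfl|rfl|rfl|rfl
    ·   rw [tp_lt (16*q+8) (16*q+4+0) (by omega),
            tp_lt (16*q+8) (16*q+4+0+3) (by omega),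
            show 16*q+4+0+3 = 16*q+7 by omega,
            show 16*q+4+0 = 16*q+4 by omega,
            t16 q 7 (by norm_num),
            t16 q 4 (by norm_num),
            tv4,
            tv7]
        all_goals (generalize thueMorse q = a; revert a; decide)
    ·   rw [tp_lt (16*q+8) (16*q+4+1) (by omega),
            tp_ge (16*q+8) (16*q+4+1+3) (by omega),
            show 16*q+4+1+3+1 = 16*q+9 by omega,
            show 16*q+4+1 = 16*q+5 by omega,
            t16 q 9 (by norm_num),
            t16 q 5 (by norm_num),
            tv5,
            tv9]
        all_goals (generalize thueMorse q = a; revert a; decide)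
    ·   rw [tp_lt (16*q+8) (16*q+4+2) (by omega),
            tp_ge (16*q+8) (16*q+4+2+3) (by omega),
            show 16*q+4+2+3+1 = 16*q+10 by omega,
            show 16*q+4+2 = 16*q+6 by omega,
            t16 q 10 (by norm_num),
            t16 q 6 (by norm_num),
            tv6,
            tv10]
        all_goals (generalize thueMorse q = a; revert a; decide)
    ·   rw [tp_lt (16*q+8) (16*q+4+3) (by omega),
            tp_ge (16*q+8) (16*q+4+3+3) (by omega),
            show 16*q+4+3+3+1 = 16*q+11 by omega,
            show 16*q+4+3 = 16*q+7 by omega,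
            t16 q 11 (by norm_num),
            t16 q 7 (by norm_num),
            tv7,
            tv11]
        all_goals (generalize thueMorse q = a; revert a; decide)
  · -- r = 9
    obtain ⟨q, rfl⟩ : ∃ q, i = 16*q+9 := ⟨i/16, by omega⟩
    refine ⟨16*q+8, 2, by norm_num, fun k hk => by omega, ?_⟩
    intro j hj
    have hj' : j = 0 ∨ j = 1 ∨ j = 2 := by omega
    rcases hj' with rfl|rfl|rfl
    ·   rw [tp_lt (16*q+9) (16*q+8+0) (by omega),
            tp_ge (16*q+9) (16*q+8+0+2) (by omega),
            show 16*q+8+0+2+1 = 16*q+11 by omega,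
            show 16*q+8+0 = 16*q+8 by omega,
            t16 q 11 (by norm_num),
            t16 q 8 (by norm_num),
            tv8,
            tv11]
        all_goals (generalize thueMorse q = a; revert a; decide)
    ·   rw [tp_ge (16*q+9) (16*q+8+1) (by omega),
            tp_ge (16*q+9) (16*q+8+1+2) (by omega),
            show 16*q+8+1+2+1 = 16*q+12 by omega,
            show 16*q+8+1+1 = 16*q+10 by omega,
            t16 q 12 (by norm_num),
            t16 q 10 (by norm_num),
            tv10,
            tv12]
        all_goals (generalize thueMorse q = a; revert a; decide)
    ·   rw [tp_ge (16*q+9) (16*q+8+2) (by omega),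
            tp_ge (16*q+9) (16*q+8+2+2) (by omega),
            show 16*q+8+2+2+1 = 16*q+13 by omega,
            show 16*q+8+2+1 = 16*q+11 by omega,
            t16 q 13 (by norm_num),
            t16 q 11 (by norm_num),
            tv11,
            tv13]
        all_goals (generalize thueMorse q = a; revert a; decide)
  · -- r = 10
    obtain ⟨q, rfl⟩ : ∃ q, i = 16*q+10 := ⟨i/16, by omega⟩
    refine ⟨16*q+8, 2, by norm_num, fun k hk => by omega, ?_⟩
    intro j hj
    have hj' : j = 0 ∨ j = 1 ∨ j = 2 := by omega
    rcases hj' with rfl|rfl|rfl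
    ·   rw [tp_lt (16*q+10) (16*q+8+0) (by omega),
            tp_ge (16*q+10) (16*q+8+0+2) (by omega),
            show 16*q+8+0+2+1 = 16*q+11 by omega,
            show 16*q+8+0 = 16*q+8 by omega,
            t16 q 11 (by norm_num),
            t16 q 8 (by norm_num),
            tv8,
            tv11]
        all_goals (generalize thueMorse q = a; revert a; decide)
    ·   rw [tp_lt (16*q+10) (16*q+8+1) (by omega),
            tp_ge (16*q+10) (16*q+8+1+2) (by omega),
            show 16*q+8+1+2+1 = 16*q+12 by omega,
            show 16*q+8+1 = 16*q+9 by omega,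
            t16 q 12 (by norm_num),
            t16 q 9 (by norm_num),
            tv9,
            tv12]
        all_goals (generalize thueMorse q = a; revert a; decide)
    ·   rw [tp_ge (16*q+10) (16*q+8+2) (by omega),
            tp_ge (16*q+10) (16*q+8+2+2) (by omega),
            show 16*q+8+2+2+1 = 16*q+13 by omega,
            show 16*q+8+2+1 = 16*q+11 by omega,
            t16 q 13 (by norm_num),
            t16 q 11 (by norm_num),
            tv11,
            tv13]
        all_goals (generalize thueMorse q = a; revert a; decide)
  · -- r = 11
    obtain ⟨q, rfl⟩ : ∃ q, i = 16*q+11 := ⟨i/16, by omega⟩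
    refine ⟨16*q+9, 1, by norm_num, fun k hk => by omega, ?_⟩
    intro j hj
    have hj' : j = 0 ∨ j = 1 := by omega
    rcases hj' with rfl|rfl
    ·   rw [tp_lt (16*q+11) (16*q+9+0) (by omega),
            tp_lt (16*q+11) (16*q+9+0+1) (by omega),
            show 16*q+9+0+1 = 16*q+10 by omega,
            show 16*q+9+0 = 16*q+9 by omega,
            t16 q 10 (by norm_num),
            t16 q 9 (by norm_num),
            tv9,
            tv10]
        all_goals (generalize thueMorse q = a; revert a; decide)
    ·   rw [tp_lt (16*q+11) (16*q+9+1) (by omega),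
            tp_ge (16*q+11) (16*q+9+1+1) (by omega),
            show 16*q+9+1+1+1 = 16*q+12 by omega,
            show 16*q+9+1 = 16*q+10 by omega,
            t16 q 12 (by norm_num),
            t16 q 10 (by norm_num),
            tv10,
            tv12]
        all_goals (generalize thueMorse q = a; revert a; decide)
  · -- r = 12
    obtain ⟨q, rfl⟩ : ∃ q, i = 16*q+12 := ⟨i/16, by omega⟩
    refine ⟨16*q+11, 1, by norm_num, fun k hk => by omega, ?_⟩
    intro j hj
    have hj' : j = 0 ∨ j = 1 := by omega
    rcases hj' with rfl|rfl
    ·   rw [tp_lt (16*q+12) (16*q+11+0) (by omega),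
            tp_ge (16*q+12) (16*q+11+0+1) (by omega),
            show 16*q+11+0+1+1 = 16*q+13 by omega,
            show 16*q+11+0 = 16*q+11 by omega,
            t16 q 13 (by norm_num),
            t16 q 11 (by norm_num),
            tv11,
            tv13]
        all_goals (generalize thueMorse q = a; revert a; decide)
    ·   rw [tp_ge (16*q+12) (16*q+11+1) (by omega),
            tp_ge (16*q+12) (16*q+11+1+1) (by omega),
            show 16*q+11+1+1+1 = 16*q+14 by omega,
            show 16*q+11+1+1 = 16*q+13 by omega,
            t16 q 14 (by norm_num),
            t16 q 13 (by norm_num),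
            tv13,
            tv14]
        all_goals (generalize thueMorse q = a; revert a; decide)
  · -- r = 13
    obtain ⟨q, rfl⟩ : ∃ q, i = 16*q+13 := ⟨i/16, by omega⟩
    refine ⟨16*q+10, 2, by norm_num, fun k hk => by omega, ?_⟩
    intro j hj
    have hj' : j = 0 ∨ j = 1 ∨ j = 2 := by omega
    rcases hj' with rfl|rfl|rfl
    ·   rw [tp_lt (16*q+13) (16*q+10+0) (by omega),
            tp_lt (16*q+13) (16*q+10+0+2) (by omega),
            show 16*q+10+0+2 = 16*q+12 by omega,
            show 16*q+10+0 = 16*q+10 by omega,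
            t16 q 12 (by norm_num),
            t16 q 10 (by norm_num),
            tv10,
            tv12]
        all_goals (generalize thueMorse q = a; revert a; decide)
    ·   rw [tp_lt (16*q+13) (16*q+10+1) (by omega),
            tp_ge (16*q+13) (16*q+10+1+2) (by omega),
            show 16*q+10+1+2+1 = 16*q+14 by omega,
            show 16*q+10+1 = 16*q+11 by omega,
            t16 q 14 (by norm_num),
            t16 q 11 (by norm_num),
            tv11,
            tv14]
        all_goals (generalize thueMorse q = a; revert a; decide)
    ·   rw [tp_lt (16*q+13) (16*q+10+2) (by omega),
            tp_ge (16*q+13) (16*q+10+2+2) (by omega),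
            show 16*q+10+2+2+1 = 16*q+15 by omega,
            show 16*q+10+2 = 16*q+12 by omega,
            t16 q 15 (by norm_num),
            t16 q 12 (by norm_num),
            tv12,
            tv15]
        all_goals (generalize thueMorse q = a; revert a; decide)
  · -- r = 14
    obtain ⟨q, rfl⟩ : ∃ q, i = 16*q+14 := ⟨i/16, by omega⟩
    refine ⟨16*q+10, 2, by norm_num, fun k hk => by omega, ?_⟩
    intro j hj
    have hj' : j = 0 ∨ j = 1 ∨ j = 2 := by omega
    rcases hj' with rfl|rfl|rfl
    ·   rw [tp_lt (16*q+14) (16*q+10+0) (by omega),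
            tp_lt (16*q+14) (16*q+10+0+2) (by omega),
            show 16*q+10+0+2 = 16*q+12 by omega,
            show 16*q+10+0 = 16*q+10 by omega,
            t16 q 12 (by norm_num),
            t16 q 10 (by norm_num),
            tv10,
            tv12]
        all_goals (generalize thueMorse q = a; revert a; decide)
    ·   rw [tp_lt (16*q+14) (16*q+10+1) (by omega),
            tp_lt (16*q+14) (16*q+10+1+2) (by omega),
            show 16*q+10+1+2 = 16*q+13 by omega,
            show 16*q+10+1 = 16*q+11 by omega,
            t16 q 13 (by norm_num),
            t16 q 11 (by norm_num),
            tv11,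
            tv13]
        all_goals (generalize thueMorse q = a; revert a; decide)
    ·   rw [tp_lt (16*q+14) (16*q+10+2) (by omega),
            tp_ge (16*q+14) (16*q+10+2+2) (by omega),
            show 16*q+10+2+2+1 = 16*q+15 by omega,
            show 16*q+10+2 = 16*q+12 by omega,
            t16 q 15 (by norm_num),
            t16 q 12 (by norm_num),
            tv12,
            tv15]
        all_goals (generalize thueMorse q = a; revert a; decide)
  · -- r = 15
    obtain ⟨q, rfl⟩ : ∃ q, i = 16*q+15 := ⟨i/16, by omega⟩
    have hsplit : thueMorse (q+1) = thueMorse q ∨ thueMorse (q+1) = thueMorse q + 1 :=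
      fin2_or _ _
    rcases hsplit with hb | hb
    · refine ⟨16*q+11, 3, by norm_num, fun k hk => by omega, ?_⟩
      intro j hj
      have hj' : j = 0 ∨ j = 1 ∨ j = 2 ∨ j = 3 := by omega
      rcases hj' with rfl|rfl|rfl|rfl
      ·   rw [tp_lt (16*q+15) (16*q+11+0) (by omega),
              tp_lt (16*q+15) (16*q+11+0+3) (by omega),
              show 16*q+11+0+3 = 16*q+14 by omega,
              show 16*q+11+0 = 16*q+11 by omega,
              t16 q 14 (by norm_num),
              t16 q 11 (by norm_num),
              tv11,
              tv14]
          all_goals (generalize thueMorse q = a; revert a; decide)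
      ·   rw [tp_lt (16*q+15) (16*q+11+1) (by omega),
              tp_ge (16*q+15) (16*q+11+1+3) (by omega),
              show 16*q+11+1+3+1 = 16*(q+1)+0 by omega,
              show 16*q+11+1 = 16*q+12 by omega,
              t16 (q+1) 0 (by norm_num),
              t16 q 12 (by norm_num),
              tv12,
              tv0,
              hb]
          all_goals (generalize thueMorse q = a; revert a; decide)
      ·   rw [tp_lt (16*q+15) (16*q+11+2) (by omega),
              tp_ge (16*q+15) (16*q+11+2+3) (by omega),
              show 16*q+11+2+3+1 = 16*(q+1)+1 by omega,
              show 16*q+11+2 = 16*q+13 by omega,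
              t16 (q+1) 1 (by norm_num),
              t16 q 13 (by norm_num),
              tv13,
              tv1,
              hb]
          all_goals (generalize thueMorse q = a; revert a; decide)
      ·   rw [tp_lt (16*q+15) (16*q+11+3) (by omega),
              tp_ge (16*q+15) (16*q+11+3+3) (by omega),
              show 16*q+11+3+3+1 = 16*(q+1)+2 by omega,
              show 16*q+11+3 = 16*q+14 by omega,
              t16 (q+1) 2 (by norm_num),
              t16 q 14 (by norm_num),
              tv14,
              tv2,
              hb]
          all_goals (generalize thueMorse q = a; revert a; decide)
    · refine ⟨16*q+13, 1, by norm_num, fun k hk => by omega, ?_⟩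
      intro j hj
      have hj' : j = 0 ∨ j = 1 := by omega
      rcases hj' with rfl|rfl
      ·   rw [tp_lt (16*q+15) (16*q+13+0) (by omega),
              tp_lt (16*q+15) (16*q+13+0+1) (by omega),
              show 16*q+13+0+1 = 16*q+14 by omega,
              show 16*q+13+0 = 16*q+13 by omega,
              t16 q 14 (by norm_num),
              t16 q 13 (by norm_num),
              tv13,
              tv14]
          all_goals (generalize thueMorse q = a; revert a; decide)
      ·   rw [tp_lt (16*q+15) (16*q+13+1) (by omega),
              tp_ge (16*q+15) (16*q+13+1+1) (by omega),
              show 16*q+13+1+1+1 = 16*(q+1)+0 by omega,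
              show 16*q+13+1 = 16*q+14 by omega,
              t16 (q+1) 0 (by norm_num),
              t16 q 14 (by norm_num),
              tv14,
              tv0,
              hb]
          all_goals (generalize thueMorse q = a; revert a; decide)


theorem thueMorse_prefix_irreducible :
    (∀ k : ℕ, 1 ≤ k → IrreducibleOverlapFree (wordPrefix thueMorse (8 * k))) ∧
    (∀ i : ℕ, 0 < i → ∃ n : ℕ, HasOverlap ((wordPrefix thueMorse n).eraseIdx i)) := by
  have main : ∀ k : ℕ, 1 ≤ k → IrreducibleOverlapFree (wordPrefix thueMorse (8*k)) := by
    intro k hk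
    refine ⟨overlapFree_prefix _, ?_, ?_⟩
    · simp [wordPrefix]
      omega
    · intro i hi hilen
      simp only [wordPrefix, List.length_map, List.length_range] at hilen
      rw [eraseIdx_wordPrefix (8*k) i hilen]
      obtain ⟨m, p, hp, hbound, hper⟩ := key i hi
      exact hasOverlap_of_period (tp i) (8*k-1) m p hp
        (by have := hbound k hilen; omega) hper
  refine ⟨main, ?_⟩
  intro i hi
  refine ⟨8*(i+1), (main (i+1) (by omega)).2.2 i hi ?_⟩
  simp only [wordPrefix, List.length_map, List.length_range]
  omega
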